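/- Shoenfield Limit Lemma: For a set A ⊆ ℕ the following are equivalent. (i) A is Δ⁰₂, i.e., there exist computable predicates R, S : ℕ → ℕ → ℕ → Bool such that for every c, c ∈ A ↔ (∃ x, ∀ y, R x y c = true) and c ∉ A ↔ (∃ z, ∀ u, S z u c = true). (ii) There exists a computable witnessing predicate f : ℕ → ℕ → Bool such that for every c the sequence w ↦ f c w is eventually constant, and its eventual value is true if and only if c ∈ A. -/

import Mathlib

namespace ShoenfieldAux

/-- `ball g s = true` iff `g y = true` for all `y ≤ s`. -/
def ball (g : ℕ → Bool) : ℕ → Bool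
  | 0 => g 0
  | s + 1 => ball g s && g (s + 1)

theorem ball_eq_rec (g : ℕ → Bool) (s : ℕ) :
    ball g s = Nat.rec (motive := fun _ => Bool) (g 0)
      (fun y IH => IH && g (y + 1)) s := by
  induction s with
  | zero => rfl
  | succ s ih => simp [ball, ih]

theorem ball_true_iff (g : ℕ → Bool) (s : ℕ) :
    ball g s = true ↔ ∀ y ≤ s, g y = true := by
  induction s with
  | zero => simp [ball, Nat.le_zero]
  | succ s ih =>
    simp only [ball, Bool.and_eq_true, ih]
    constructor
    · rintro ⟨h1, h2⟩ y hy
      rcases Nat.le_succ_iff.mp hy with h | h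
      · exact h1 y h
      · exact h ▸ h2
    · intro h
      exact ⟨fun y hy => h y (le_trans hy (Nat.le_succ s)), h _ le_rfl⟩

/-- `xfind g k` is the least `x ≤ k` with `g x = true`, and `k + 1` if no such `x` exists. -/
def xfind (g : ℕ → Bool) : ℕ → ℕ
  | 0 => bif g 0 then 0 else 1
  | k + 1 => bif decide (xfind g k ≤ k) then xfind g k
      else bif g (k + 1) then k + 1 else k + 2

theorem xfind_eq_rec (g : ℕ → Bool) (k : ℕ) :
    xfind g k = Nat.rec (motive := fun _ => ℕ) (bif g 0 then 0 else 1)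
      (fun y IH => bif decide (IH ≤ y) then IH
        else bif g (y + 1) then y + 1 else y + 2) k := by
  induction k with
  | zero => rfl
  | succ k ih => simp [xfind, ih]

theorem xfind_spec (g : ℕ → Bool) (k : ℕ) (h : xfind g k ≤ k) : g (xfind g k) = true := by
  induction k with
  | zero =>
    cases hg : g 0
    · simp only [xfind, hg, cond_false] at h
      omega
    · simp [xfind, hg]
  | succ k ih =>
    by_cases hk : xfind g k ≤ k
    · simp only [xfind, decide_eq_true hk, cond_true]
      exact ih hk
    · simp only [xfind, decide_eq_false hk, cond_false] at h ⊢
      cases hg : g (k + 1)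
      · simp only [hg, cond_false] at h
        omega
      · simp [hg]

theorem xfind_min (g : ℕ → Bool) (k x : ℕ) (hx : x ≤ k) (hg : g x = true) :
    xfind g k ≤ x := by
  induction k with
  | zero =>
    interval_cases x
    simp [xfind, hg]
  | succ k ih =>
    by_cases hk : xfind g k ≤ k
    · simp only [xfind, decide_eq_true hk, cond_true]
      rcases Nat.le_succ_iff.mp hx with h | h
      · exact ih h
      · exact h ▸ le_trans hk (Nat.le_succ k)
    · rcases Nat.le_succ_iff.mp hx with h | h
      · exact absurd (le_trans (ih h) h) hk
      · subst h
        simp only [xfind, decide_eq_false hk, cond_false, hg, cond_true]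
        exact le_rfl

/-- A uniform bound for finitely many counterexamples. -/
theorem exists_bound (g : ℕ → ℕ → Bool) (k : ℕ) (h : ∀ x ≤ k, ∃ y, g x y = false) :
    ∃ N, ∀ x ≤ k, ∃ y ≤ N, g x y = false := by
  induction k with
  | zero =>
    obtain ⟨y, hy⟩ := h 0 le_rfl
    exact ⟨y, fun x hx => by interval_cases x; exact ⟨y, le_rfl, hy⟩⟩
  | succ k ih =>
    obtain ⟨N, hN⟩ := ih fun x hx => h x (le_trans hx (Nat.le_succ k))
    obtain ⟨y, hy⟩ := h (k + 1) le_rfl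
    refine ⟨max N y, fun x hx => ?_⟩
    rcases Nat.le_succ_iff.mp hx with hx' | hx'
    · obtain ⟨u, hu, hu'⟩ := hN x hx'
      exact ⟨u, le_trans hu (le_max_left _ _), hu'⟩
    · subst hx'
      exact ⟨y, le_max_right _ _, hy⟩

/-- `bAllAux R ((c, x), s) = true` iff `R x y c = true` for all `y ≤ s`. -/
def bAllAux (R : ℕ → ℕ → ℕ → Bool) (a : (ℕ × ℕ) × ℕ) : Bool :=
  ball (fun y => R a.1.2 y a.1.1) a.2

/-- Least `x ≤ s` such that `R x y c = true` for all `y ≤ s` (input `a = (c, s)`),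
or `s + 1` if there is no such `x`. -/
def xstarAux (R : ℕ → ℕ → ℕ → Bool) (a : ℕ × ℕ) : ℕ :=
  xfind (fun x => bAllAux R ((a.1, x), a.2)) a.2

open Computable in
theorem bAllAux_computable {R : ℕ → ℕ → ℕ → Bool}
    (hR : Computable (fun p : ℕ × ℕ × ℕ => R p.1 p.2.1 p.2.2)) :
    Computable (bAllAux R) := by
  have harg1 : Computable (fun a : (ℕ × ℕ) × ℕ => ((a.1.2, 0, a.1.1) : ℕ × ℕ × ℕ)) :=
    (snd.comp fst).pair ((const 0).pair (fst.comp fst))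
  have hg : Computable fun a : (ℕ × ℕ) × ℕ => R a.1.2 0 a.1.1 :=
    (hR.comp harg1).of_eq fun a => rfl
  have harg2 : Computable (fun q : ((ℕ × ℕ) × ℕ) × (ℕ × Bool) =>
      ((q.1.1.2, q.2.1 + 1, q.1.1.1) : ℕ × ℕ × ℕ)) :=
    ((snd.comp fst).comp fst).pair ((succ.comp (fst.comp snd)).pair
      ((fst.comp fst).comp fst))
  have hc2 : Computable (fun q : ((ℕ × ℕ) × ℕ) × (ℕ × Bool) =>
      R q.1.1.2 (q.2.1 + 1) q.1.1.1) := (hR.comp harg2).of_eq fun q => rfl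
  have hc1 : Computable (fun q : ((ℕ × ℕ) × ℕ) × (ℕ × Bool) => q.2.2) := snd.comp snd
  have hh' : Computable (fun q : ((ℕ × ℕ) × ℕ) × (ℕ × Bool) =>
      q.2.2 && R q.1.1.2 (q.2.1 + 1) q.1.1.1) :=
    (Computable.cond hc1 hc2 (const false)).of_eq fun q => by cases q.2.2 <;> rfl
  have hh : Computable₂ fun (a : (ℕ × ℕ) × ℕ) (p : ℕ × Bool) =>
      p.2 && R a.1.2 (p.1 + 1) a.1.1 := hh'
  exact (Computable.nat_rec Computable.snd hg hh).of_eq fun a =>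
    ((ball_eq_rec (fun y => R a.1.2 y a.1.1) a.2).symm : _)

open Computable in
theorem xstarAux_computable {R : ℕ → ℕ → ℕ → Bool}
    (hR : Computable (fun p : ℕ × ℕ × ℕ => R p.1 p.2.1 p.2.2)) :
    Computable (xstarAux R) := by
  have hb := bAllAux_computable hR
  have harg1 : Computable (fun a : ℕ × ℕ => (((a.1, 0), a.2) : (ℕ × ℕ) × ℕ)) :=
    (fst.pair (const 0)).pair snd
  have hb1 : Computable (fun a : ℕ × ℕ => bAllAux R ((a.1, 0), a.2)) :=
    (hb.comp harg1).of_eq fun a => rfl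
  have hg : Computable fun a : ℕ × ℕ => cond (bAllAux R ((a.1, 0), a.2)) 0 1 :=
    Computable.cond hb1 (const 0) (const 1)
  have harg2 : Computable (fun q : (ℕ × ℕ) × (ℕ × ℕ) =>
      (((q.1.1, q.2.1 + 1), q.1.2) : (ℕ × ℕ) × ℕ)) :=
    ((fst.comp fst).pair (succ.comp (fst.comp snd))).pair (snd.comp fst)
  have hb2 : Computable (fun q : (ℕ × ℕ) × (ℕ × ℕ) =>
      bAllAux R ((q.1.1, q.2.1 + 1), q.1.2)) := (hb.comp harg2).of_eq fun q => rfl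
  have hle : Computable (fun q : (ℕ × ℕ) × (ℕ × ℕ) => decide (q.2.2 ≤ q.2.1)) :=
    ((Primrec.nat_le.decide.to_comp).comp (snd.comp snd) (fst.comp snd)).of_eq fun q => rfl
  have hh' : Computable (fun q : (ℕ × ℕ) × (ℕ × ℕ) =>
      cond (decide (q.2.2 ≤ q.2.1)) q.2.2
        (cond (bAllAux R ((q.1.1, q.2.1 + 1), q.1.2)) (q.2.1 + 1) (q.2.1 + 2))) :=
    Computable.cond hle (snd.comp snd)
      (Computable.cond hb2 (succ.comp (fst.comp snd))
        (succ.comp (succ.comp (fst.comp snd))))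
  have hh : Computable₂ fun (a : ℕ × ℕ) (p : ℕ × ℕ) =>
      cond (decide (p.2 ≤ p.1)) p.2
        (cond (bAllAux R ((a.1, p.1 + 1), a.2)) (p.1 + 1) (p.1 + 2)) := hh'
  exact (Computable.nat_rec Computable.snd hg hh).of_eq fun a =>
    ((xfind_eq_rec (fun x => bAllAux R ((a.1, x), a.2)) a.2).symm : _)

end ShoenfieldAux

open ShoenfieldAux in
/-- Shoenfield Limit Lemma: `A` is Δ⁰₂ (given by computable predicates `R`, `S`
witnessing membership and non-membership in Σ⁰₂ form) iff there is a computable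
witnessing predicate `f` such that for every `c` the sequence `w ↦ f c w` is
eventually constant, with eventual value `true` iff `c ∈ A`. -/
theorem shoenfield_limit_lemma (A : Set ℕ) :
    (∃ R S : ℕ → ℕ → ℕ → Bool,
      Computable (fun p : ℕ × ℕ × ℕ => R p.1 p.2.1 p.2.2) ∧
      Computable (fun p : ℕ × ℕ × ℕ => S p.1 p.2.1 p.2.2) ∧
      ∀ c : ℕ, (c ∈ A ↔ ∃ x, ∀ y, R x y c = true) ∧
               (c ∉ A ↔ ∃ z, ∀ u, S z u c = true)) ↔
    (∃ f : ℕ → ℕ → Bool, Computable₂ f ∧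
      ∀ c : ℕ, ∃ m : ℕ, ∃ ℓ : Bool, (∀ n ≥ m, f c n = ℓ) ∧ (ℓ = true ↔ c ∈ A)) := by
  constructor
  · rintro ⟨R, S, hRc, hSc, hRS⟩
    refine ⟨fun c s => decide (xstarAux R (c, s) ≤ xstarAux S (c, s)), ?_, ?_⟩
    · exact ((Primrec.nat_le.decide.to_comp).comp (xstarAux_computable hRc)
        (xstarAux_computable hSc)).of_eq fun p => rfl
    · intro c
      by_cases hc : c ∈ A
      · -- eventually true
        obtain ⟨x₀, hx₀⟩ := ((hRS c).1).mp hc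
        have hSfail : ∀ z, ∃ u, S z u c = false := by
          intro z
          by_contra h
          push_neg at h
          exact ((hRS c).2).mpr ⟨z, fun u => by
            have := h u; revert this; cases S z u c <;> simp⟩ hc
        obtain ⟨N, hN⟩ := exists_bound (fun z u => S z u c) x₀ fun z _ => hSfail z
        refine ⟨max x₀ N, true, fun n hn => ?_, by simp [hc]⟩
        have hx₀n : x₀ ≤ n := le_trans (le_max_left _ _) hn
        have hNn : N ≤ n := le_trans (le_max_right _ _) hn
        have hR1 : xstarAux R (c, n) ≤ x₀ := by
          apply xfind_min _ _ _ hx₀n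
          exact (ball_true_iff _ _).mpr fun y _ => hx₀ y
        have hS1 : x₀ < xstarAux S (c, n) := by
          by_contra h
          push_neg at h
          have hle : xstarAux S (c, n) ≤ n := le_trans h hx₀n
          have h2 : ∀ u ≤ n, S (xstarAux S (c, n)) u c = true :=
            (ball_true_iff (fun y => S (xstarAux S (c, n)) y c) n).mp (xfind_spec _ _ hle)
          obtain ⟨u, hu, hu'⟩ := hN _ h
          have h3 := h2 u (le_trans hu hNn)
          rw [hu'] at h3
          exact absurd h3 (by simp)
        simp only [decide_eq_true_eq]
        exact le_trans hR1 (le_of_lt hS1)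
      · -- eventually false
        obtain ⟨z₀, hz₀⟩ := ((hRS c).2).mp hc
        have hRfail : ∀ x, ∃ y, R x y c = false := by
          intro x
          by_contra h
          push_neg at h
          exact hc (((hRS c).1).mpr ⟨x, fun y => by
            have := h y; revert this; cases R x y c <;> simp⟩)
        obtain ⟨N, hN⟩ := exists_bound (fun x y => R x y c) z₀ fun x _ => hRfail x
        refine ⟨max z₀ N, false, fun n hn => ?_, by simp [hc]⟩
        have hz₀n : z₀ ≤ n := le_trans (le_max_left _ _) hn
        have hNn : N ≤ n := le_trans (le_max_right _ _) hn
        have hS1 : xstarAux S (c, n) ≤ z₀ := by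
          apply xfind_min _ _ _ hz₀n
          exact (ball_true_iff _ _).mpr fun u _ => hz₀ u
        have hR1 : z₀ < xstarAux R (c, n) := by
          by_contra h
          push_neg at h
          have hle : xstarAux R (c, n) ≤ n := le_trans h hz₀n
          have h2 : ∀ y ≤ n, R (xstarAux R (c, n)) y c = true :=
            (ball_true_iff (fun y => R (xstarAux R (c, n)) y c) n).mp (xfind_spec _ _ hle)
          obtain ⟨y, hy, hy'⟩ := hN _ h
          have h3 := h2 y (le_trans hy hNn)
          rw [hy'] at h3
          exact absurd h3 (by simp)
        simp only [decide_eq_false_iff_not, not_le]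
        exact lt_of_le_of_lt hS1 hR1
  · rintro ⟨f, hf, hlim⟩
    refine ⟨fun x y c => f c (x + y), fun z u c => !(f c (z + u)), ?_, ?_, ?_⟩
    · exact (hf.comp (Computable.snd.comp Computable.snd)
        ((Primrec.nat_add.to_comp).comp Computable.fst
          (Computable.fst.comp Computable.snd))).of_eq fun p => rfl
    · exact ((Primrec.not.to_comp).comp (hf.comp (Computable.snd.comp Computable.snd)
        ((Primrec.nat_add.to_comp).comp Computable.fst
          (Computable.fst.comp Computable.snd)))).of_eq fun p => rfl
    · intro c
      obtain ⟨m, ℓ, hm, hℓ⟩ := hlim c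
      constructor
      · constructor
        · intro hc
          refine ⟨m, fun y => ?_⟩
          show f c (m + y) = true
          rw [hm (m + y) (Nat.le_add_right m y)]
          exact hℓ.mpr hc
        · rintro ⟨x, hx⟩
          have h1 : f c (x + m) = true := hx m
          rw [hm (x + m) (Nat.le_add_left m x)] at h1
          exact hℓ.mp h1
      · constructor
        · intro hc
          refine ⟨m, fun u => ?_⟩
          show (!(f c (m + u))) = true
          rw [hm (m + u) (Nat.le_add_right m u)]
          cases hℓ' : ℓ
          · rfl
          · exact absurd (hℓ.mp hℓ') hc
        · rintro ⟨z, hz⟩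
          intro hc
          have h1 : (!(f c (z + m))) = true := hz m
          rw [hm (z + m) (Nat.le_add_left m z), hℓ.mpr hc] at h1
          simp at h1
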